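/- arXiv:1310.7911 — 2 statements merged into one kernel-verified Lean document; each statement's English description precedes it below -/
import Mathlib

section
/- Let (X,d,α) be a computable metric space which is locally computable, and let S be a co-c.e. closed set in (X,d,α) which is compact. Then S is a semi-computable compact set in (X,d,α). -/
open Metric Set

namespace CMS

/-- A function `f : α → ℝ` (on a `Primcodable` type of codes) is computable if some
computable `F : α → ℕ → ℚ` approximates it with precision `2 ^ (-i)`. -/
def ComputableReal {α : Type*} [Primcodable α] (f : α → ℝ) : Prop :=
  ∃ F : α → ℕ → ℚ, Computable₂ F ∧ ∀ x i, |f x - (F x i : ℝ)| < (2 : ℝ) ^ (-(i : ℤ))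

/-- `(X, d, α)` is a computable metric space: `α` has dense range and
`(i,j) ↦ d (α i) (α j)` is computable. -/
structure IsComputableMetric {X : Type*} [MetricSpace X] (α : ℕ → X) : Prop where
  dense : DenseRange α
  dist_computable : ComputableReal (fun p : ℕ × ℕ => dist (α p.1) (α p.2))

variable {X : Type*} [MetricSpace X]

/-- The open ball denoted by the rational ball code `c = (i, q)`. -/
def ratBall (α : ℕ → X) (c : ℕ × ℚ) : Set X := Metric.ball (α c.1) (c.2 : ℝ)

/-- The rational open set denoted by a rational open set code (a list of ball codes). -/
def ratOpen (α : ℕ → X) (L : List (ℕ × ℚ)) : Set X := ⋃ c ∈ L, ratBall α c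

/-- A valid rational open set code: a nonempty list of ball codes with positive radii. -/
def ValidCode (L : List (ℕ × ℚ)) : Prop := L ≠ [] ∧ ∀ c ∈ L, 0 < c.2

/-- `K` is a semi-computable compact set: `K` is compact and the set of rational
open set codes whose denoted set contains `K` is c.e. -/
def SemiComputableCompact (α : ℕ → X) (K : Set X) : Prop :=
  IsCompact K ∧ REPred (fun L : List (ℕ × ℚ) => ValidCode L ∧ K ⊆ ratOpen α L)

/-- `S` is a c.e. closed set: `S` is closed and the set of rational ball codes whose
denoted ball meets `S` is c.e. -/
def CeClosed (α : ℕ → X) (S : Set X) : Prop :=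
  IsClosed S ∧ REPred (fun c : ℕ × ℚ => 0 < c.2 ∧ (ratBall α c ∩ S).Nonempty)

/-- `S` is a co-c.e. closed set: `S` is closed and there is a computable sequence of
rational ball codes whose denoted balls have union `X \ S`. -/
def CoCeClosed (α : ℕ → X) (S : Set X) : Prop :=
  IsClosed S ∧ ∃ f : ℕ → ℕ × ℚ, Computable f ∧ (∀ k, 0 < (f k).2) ∧
    Sᶜ = ⋃ k, ratBall α (f k)

/-- A computable compact set: semi-computable compact and c.e. closed. -/
def ComputableCompact (α : ℕ → X) (K : Set X) : Prop :=
  SemiComputableCompact α K ∧ CeClosed α K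

/-- A computable closed set: c.e. closed and co-c.e. closed. -/
def ComputableClosed (α : ℕ → X) (S : Set X) : Prop :=
  CeClosed α S ∧ CoCeClosed α S

/-- `(X, d, α)` is locally computable: each compact set is contained in a computable
compact set. -/
def LocallyComputable (α : ℕ → X) : Prop :=
  ∀ A : Set X, IsCompact A → ∃ K : Set X, ComputableCompact α K ∧ A ⊆ K

/-- The half-space `ℍⁿ = {x ∈ ℝⁿ | xₙ ≥ 0}` (the condition is on the last coordinate). -/
def halfSpace (n : ℕ) : Set (Fin n → ℝ) :=
  {x | ∀ i : Fin n, (i : ℕ) = n - 1 → 0 ≤ x i}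

/-- `Bd ℍⁿ = {x ∈ ℍⁿ | xₙ = 0}`. -/
def bdHalfSpace (n : ℕ) : Set (Fin n → ℝ) :=
  {x | ∀ i : Fin n, (i : ℕ) = n - 1 → x i = 0}

/-- `U` is an open subset of the half-space `ℍⁿ` (in the subspace topology). -/
def IsOpenInHalfSpace (n : ℕ) (U : Set (Fin n → ℝ)) : Prop :=
  U ⊆ halfSpace n ∧ ∃ V : Set (Fin n → ℝ), IsOpen V ∧ U = V ∩ halfSpace n

/-- `M` is an `n`-manifold with boundary: `M` is nonempty and every point has a
neighborhood homeomorphic to an open subset of `ℍⁿ`. -/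
def IsManifoldWithBoundaryOfDim (n : ℕ) (M : Type*) [TopologicalSpace M] : Prop :=
  Nonempty M ∧ ∀ x : M, ∃ N : Set M, N ∈ nhds x ∧
    ∃ U : Set (Fin n → ℝ), IsOpenInHalfSpace n U ∧ Nonempty (↥N ≃ₜ ↥U)

/-- The boundary `∂M` of an `n`-manifold with boundary: points having a neighborhood
homeomorphic to an open subset of `ℍⁿ` by a homeomorphism sending the point into `Bd ℍⁿ`. -/
def manifoldBoundary (n : ℕ) (M : Type*) [TopologicalSpace M] : Set M :=
  {x | ∃ N : Set M, N ∈ nhds x ∧ ∃ U : Set (Fin n → ℝ), IsOpenInHalfSpace n U ∧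
    ∃ (h : ↥N ≃ₜ ↥U) (hx : x ∈ N), ((h ⟨x, hx⟩ : ↥U) : Fin n → ℝ) ∈ bdHalfSpace n}

/-- `M` is an `n`-manifold (without boundary): `M` is nonempty and every point has a
neighborhood homeomorphic to `ℝⁿ`. -/
def IsManifoldOfDim (n : ℕ) (M : Type*) [TopologicalSpace M] : Prop :=
  Nonempty M ∧ ∀ x : M, ∃ N : Set M, N ∈ nhds x ∧ Nonempty (↥N ≃ₜ (Fin n → ℝ))

/-- `A ≺_ε B` : every point of `A` is within distance `< ε` of some point of `B`. -/
def Prec (ε : ℝ) (A B : Set X) : Prop := ∀ a ∈ A, ∃ b ∈ B, dist a b < ε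

/-- The finite set of rational points denoted by a finite-point code (a list of naturals). -/
def finPts (α : ℕ → X) (L : List ℕ) : Set X := {x | ∃ l ∈ L, α l = x}

/-- `A` is computable up to `B`: a computable function produces, for each `k`, a
finite-point code with denoted set `Λ_k` such that `A ≺_{2^{-k}} Λ_k` and `Λ_k ≺_{2^{-k}} B`. -/
def ComputableUpTo (α : ℕ → X) (A B : Set X) : Prop :=
  ∃ f : ℕ → List ℕ, Computable f ∧ ∀ k : ℕ, f k ≠ [] ∧
    Prec ((2 : ℝ) ^ (-(k : ℤ))) A (finPts α (f k)) ∧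
    Prec ((2 : ℝ) ^ (-(k : ℤ))) (finPts α (f k)) B

def flist (f : ℕ → ℕ × ℚ) : ℕ → List (ℕ × ℚ)
  | 0 => [f 0]
  | n + 1 => f (n + 1) :: flist f n

lemma mem_flist {f : ℕ → ℕ × ℚ} {c : ℕ × ℚ} {n : ℕ} :
    c ∈ flist f n ↔ ∃ k ≤ n, f k = c := by
  induction n with
  | zero => simp [flist, eq_comm]
  | succ m ih =>
    simp only [flist, List.mem_cons, ih]
    constructor
    · rintro (rfl | ⟨k, hk, rfl⟩)
      · exact ⟨m + 1, le_refl _, rfl⟩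
      · exact ⟨k, hk.trans (Nat.le_succ m), rfl⟩
    · rintro ⟨k, hk, rfl⟩
      rcases Nat.eq_or_lt_of_le hk with rfl | h
      · exact Or.inl rfl
      · exact Or.inr ⟨k, Nat.lt_succ_iff.1 h, rfl⟩

lemma computable_flist {f : ℕ → ℕ × ℚ} (hf : Computable f) : Computable (flist f) := by
  have : Computable fun n : ℕ =>
      Nat.rec (motive := fun _ => List (ℕ × ℚ)) [f 0] (fun k IH => f (k + 1) :: IH) n :=
    Computable.nat_rec Computable.id (Computable.const [f 0])
      ((Computable.list_cons.comp
        (hf.comp (Computable.succ.comp (Computable.fst.comp Computable.snd)))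
        (Computable.snd.comp Computable.snd)).to₂)
  apply this.of_eq
  intro n
  induction n with
  | zero => rfl
  | succ m ih => simp [flist, ← ih]

lemma ratOpen_append (α : ℕ → X) (A B : List (ℕ × ℚ)) :
    ratOpen α (A ++ B) = ratOpen α A ∪ ratOpen α B := by
  simp [ratOpen, List.mem_append, iUnion_or, iUnion_union_distrib]

theorem rePred_exists' {α β : Type*} [Primcodable α] [Primcodable β] {p : β → Prop}
    (hp : REPred p) {g : α → ℕ → β} (hg : Computable₂ g) :
    REPred fun a => ∃ n, p (g a n) := by
  obtain ⟨c, hc⟩ := Nat.Partrec.Code.exists_code.1 hp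
  have key : ∀ b : β, p b ↔ (Nat.Partrec.Code.eval c (Encodable.encode b)).Dom := by
    intro b
    rw [hc]
    simp [Part.dom_iff_mem, Encodable.encodek, Part.assert]
  have h1 : Computable fun q : α × ℕ => q.2.unpair.2 :=
    (Primrec.snd.comp (Primrec.unpair.comp Primrec.snd)).to_comp
  have h1' : Computable fun q : α × ℕ => q.2.unpair.1 :=
    (Primrec.fst.comp (Primrec.unpair.comp Primrec.snd)).to_comp
  have h2 : Computable fun q : α × ℕ => Encodable.encode (g q.1 q.2.unpair.1) :=
    Computable.encode.comp (hg.comp Computable.fst h1')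
  have hF : Computable₂ fun (a : α) (m : ℕ) =>
      Nat.Partrec.Code.evaln m.unpair.2 c (Encodable.encode (g a m.unpair.1)) :=
    (Nat.Partrec.Code.primrec_evaln.to_comp.comp
      (((h1.pair (Computable.const c)).pair h2))).to₂
  apply (Partrec.rfindOpt hF).dom_re.of_eq
  intro a
  rw [Nat.rfindOpt_dom]
  constructor
  · rintro ⟨n, y, hy⟩
    exact ⟨n.unpair.1, (key _).2 (Part.dom_iff_mem.2
      ⟨y, Nat.Partrec.Code.evaln_complete.2 ⟨_, hy⟩⟩)⟩
  · rintro ⟨m, hm⟩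
    obtain ⟨y, hy⟩ := Part.dom_iff_mem.1 ((key _).1 hm)
    obtain ⟨k, hk⟩ := Nat.Partrec.Code.evaln_complete.1 hy
    exact ⟨Nat.pair m k, y, by simpa using hk⟩


end CMS

open CMS in
/-- In a locally computable computable metric space, every compact
co-c.e. closed set is a semi-computable compact set. -/
theorem stmt_8 {X : Type} [MetricSpace X] (α : ℕ → X) (hα : IsComputableMetric α)
    (hloc : LocallyComputable α)
    (S : Set X) (hS : CoCeClosed α S) (hcomp : IsCompact S) :
    SemiComputableCompact α S := by
  obtain ⟨hScl, f, hfc, hfpos, hSc⟩ := hS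
  obtain ⟨K, ⟨⟨hKc, hKre⟩, _⟩, hSK⟩ := hloc S hcomp
  refine ⟨hcomp, ?_⟩
  set g : List (ℕ × ℚ) → ℕ → List (ℕ × ℚ) :=
    fun L n => bif decide (L = []) then [] else L ++ flist f n with hgdef
  have hg : Computable₂ g := by
    have hc : Computable fun q : List (ℕ × ℚ) × ℕ => decide (q.1 = []) :=
      (Primrec.eq.comp Primrec.fst (Primrec.const [])).decide.to_comp
    exact (Computable.cond hc (Computable.const [])
      (Computable.list_append.comp Computable.fst
        ((computable_flist hfc).comp Computable.snd))).to₂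
  apply (rePred_exists' hKre hg).of_eq
  intro L
  constructor
  · -- ∃ n, ValidCode (g L n) ∧ K ⊆ ratOpen α (g L n) → ValidCode L ∧ S ⊆ ratOpen α L
    rintro ⟨n, ⟨hne, hpos⟩, hKsub⟩
    have hL : L ≠ [] := by
      rintro rfl
      simp [hgdef] at hne
    have hgLn : g L n = L ++ flist f n := by simp [hgdef, hL]
    rw [hgLn] at hpos hKsub
    refine ⟨⟨hL, fun c hc => hpos c (List.mem_append_left _ hc)⟩, ?_⟩
    intro x hx
    have hxK : x ∈ ratOpen α L ∪ ratOpen α (flist f n) := by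
      rw [← ratOpen_append]; exact hKsub (hSK hx)
    rcases hxK with h | h
    · exact h
    · exfalso
      obtain ⟨c, hcmem, hxc⟩ := Set.mem_iUnion₂.1 h
      obtain ⟨k, _, rfl⟩ := mem_flist.1 hcmem
      have : x ∈ Sᶜ := by rw [hSc]; exact Set.mem_iUnion.2 ⟨k, hxc⟩
      exact this hx
  · -- ValidCode L ∧ S ⊆ ratOpen α L → ∃ n, ...
    rintro ⟨⟨hL, hLpos⟩, hSL⟩
    have hcover : K ⊆ ⋃ k, (ratOpen α L ∪ ratBall α (f k)) := by
      intro x hx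
      by_cases hxS : x ∈ S
      · exact Set.mem_iUnion.2 ⟨0, Or.inl (hSL hxS)⟩
      · have : x ∈ Sᶜ := hxS
        rw [hSc] at this
        obtain ⟨k, hk⟩ := Set.mem_iUnion.1 this
        exact Set.mem_iUnion.2 ⟨k, Or.inr hk⟩
    obtain ⟨t, ht⟩ := hKc.elim_finite_subcover _
      (fun k => (isOpen_biUnion fun _ _ => isOpen_ball).union isOpen_ball) hcover
    refine ⟨t.sup id, ⟨?_, ?_⟩, ?_⟩
    · simp [hgdef, hL]
    · intro c hc
      rw [hgdef] at hc
      simp only [hL, decide_false, cond_false, List.mem_append] at hc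
      rcases hc with h | h
      · exact hLpos c h
      · obtain ⟨k, _, rfl⟩ := mem_flist.1 h
        exact hfpos k
    · have hgLn : g L (t.sup id) = L ++ flist f (t.sup id) := by simp [hgdef, hL]
      rw [hgLn, ratOpen_append]
      intro x hx
      obtain ⟨k, hkmem, hk⟩ := Set.mem_iUnion₂.1 (ht hx)
      rcases hk with h | h
      · exact Or.inl h
      · refine Or.inr (Set.mem_biUnion ?_ h)
        exact mem_flist.2 ⟨k, Finset.le_sup (f := id) hkmem, rfl⟩
end

section
/- Let (X,d,α) be a computable metric space, let S be a semi-computable compact set in (X,d,α), and let J be a rational open set (the set denoted by some rational open set code). Then S ∖ J is a semi-computable compact set in (X,d,α). -/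
open Metric Set

open CMS in
/-- If `S` is a semi-computable compact set and `J` is a rational open set
(the set denoted by some rational open set code), then `S \ J` is a semi-computable
compact set. -/
theorem stmt_9 {X : Type} [MetricSpace X] (α : ℕ → X) (hα : IsComputableMetric α)
    (S : Set X) (hS : SemiComputableCompact α S)
    (L : List (ℕ × ℚ)) (hL : ValidCode L) :
    SemiComputableCompact α (S \ ratOpen α L) := by
  obtain ⟨hScomp, hSre⟩ := hS
  refine ⟨hScomp.diff (isOpen_biUnion fun c _ => isOpen_ball), ?_⟩
  -- key equivalence
  have key : ∀ L' : List (ℕ × ℚ),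
      (L' ≠ [] ∧ (ValidCode (L' ++ L) ∧ S ⊆ ratOpen α (L' ++ L))) ↔
      (ValidCode L' ∧ S \ ratOpen α L ⊆ ratOpen α L') := by
    intro L'
    have hunion : ratOpen α (L' ++ L) = ratOpen α L' ∪ ratOpen α L := by
      ext x
      simp only [ratOpen, Set.mem_iUnion, Set.mem_union, List.mem_append]
      constructor
      · rintro ⟨c, h | h, hx⟩
        · exact Or.inl ⟨c, h, hx⟩
        · exact Or.inr ⟨c, h, hx⟩
      · rintro (⟨c, h, hx⟩ | ⟨c, h, hx⟩)
        · exact ⟨c, Or.inl h, hx⟩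
        · exact ⟨c, Or.inr h, hx⟩
    constructor
    · rintro ⟨hne, ⟨-, hpos⟩, hsub⟩
      refine ⟨⟨hne, fun c hc => hpos c (List.mem_append_left _ hc)⟩, ?_⟩
      intro x hx
      rcases (hunion ▸ hsub) hx.1 with h | h
      · exact h
      · exact absurd h hx.2
    · rintro ⟨⟨hne, hpos⟩, hsub⟩
      refine ⟨hne, ⟨by simp [hne], fun c hc => ?_⟩, ?_⟩
      · rcases List.mem_append.mp hc with h | h
        · exact hpos c h
        · exact hL.2 c h
      · intro x hx
        rw [hunion]
        by_cases hxL : x ∈ ratOpen α L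
        · exact Or.inr hxL
        · exact Or.inl (hsub ⟨hx, hxL⟩)
  -- computability
  have happ : Computable (fun L' : List (ℕ × ℚ) => L' ++ L) :=
    (Primrec.list_append.comp Primrec.id (Primrec.const L)).to_comp
  have h1 : Partrec (fun L' : List (ℕ × ℚ) =>
      Part.assert (ValidCode (L' ++ L) ∧ S ⊆ ratOpen α (L' ++ L)) fun _ => Part.some ()) :=
    hSre.comp happ
  have hne : REPred (fun L' : List (ℕ × ℚ) => L' ≠ []) := by
    refine ComputablePred.to_re ⟨fun L' => instDecidableNot, ?_⟩
    exact Primrec.to_comp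
      ((Primrec.not.comp (Primrec.eq.comp Primrec.id (Primrec.const [])).decide).of_eq (by simp))
  have h2 : Partrec (fun L' : List (ℕ × ℚ) =>
      (Part.assert (L' ≠ []) fun _ => Part.some ()).bind fun _ =>
        Part.assert (ValidCode (L' ++ L) ∧ S ⊆ ratOpen α (L' ++ L)) fun _ => Part.some ()) :=
    hne.bind (h1.comp Computable.fst).to₂
  refine (Partrec.dom_re h2).of_eq fun L' => ?_
  simp only [Part.bind_dom, Part.assert, Part.some_dom]
  constructor
  · rintro ⟨⟨h, -⟩, h', -⟩
    exact (key L').mp ⟨h, h'⟩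
  · intro h
    obtain ⟨h1', h2'⟩ := (key L').mpr h
    exact ⟨⟨h1', trivial⟩, h2', trivial⟩
end
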